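/- Under the setup, curvature-one condition, and eigenvalue condition described in the context: if μ1 < μ2, then λ1 < λ2. -/

import Mathlib

open scoped RealInnerProductSpace
set_option maxHeartbeats 1000000 in

/-- In the two-invariant-planes setup with the curvature-one condition and
the eigenvalue condition on `W = σ1 ⊕ σ2`: if `μ1 < μ2` then `λ1 < λ2`. -/
theorem stmt_8
    {V : Type*} [NormedAddCommGroup V] [InnerProductSpace ℝ V] [FiniteDimensional ℝ V]
    (R : V →ₗ[ℝ] V →ₗ[ℝ] V →ₗ[ℝ] V →ₗ[ℝ] ℝ)
    (hskew : ∀ X Y Z W : V, R X Y Z W = - R Y X Z W)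
    (hpair : ∀ X Y Z W : V, R X Y Z W = R Z W X Y)
    (σ1 σ2 : Submodule ℝ V)
    (hσ1 : Module.finrank ℝ σ1 = 2) (hσ2 : Module.finrank ℝ σ2 = 2)
    (horth : ∀ x ∈ σ1, ∀ y ∈ σ2, ⟪x, y⟫ = 0)
    (A : V →ₗ[ℝ] V)
    (hAskew : ∀ x y : V, ⟪A x, y⟫ = -⟪x, A y⟫)
    (hA1 : Submodule.map A σ1 = σ1) (hA2 : Submodule.map A σ2 = σ2)
    (μ1 μ2 : ℝ) (hμ1 : 0 < μ1) (hμ2 : 0 < μ2)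
    (hAμ1 : ∀ x ∈ σ1, ‖A x‖ = μ1 * ‖x‖) (hAμ2 : ∀ x ∈ σ2, ‖A x‖ = μ2 * ‖x‖)
    (lam1 lam2 : ℝ)
    (hlam1 : ∀ x ∈ σ1, ‖x‖ = 1 → R x (A x) (A x) x = lam1 * μ1 ^ 2)
    (hlam2 : ∀ x ∈ σ2, ‖x‖ = 1 → R x (A x) (A x) x = lam2 * μ2 ^ 2)
    (hcvc : ∀ v ∈ σ1 ⊔ σ2, ‖v‖ = 1 → ∀ w ∈ σ1 ⊔ σ2, ⟪w, v⟫ = 0 → ⟪w, A v⟫ = 0 →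
      ∀ u ∈ σ1 ⊔ σ2, R w v v u = ⟪w, u⟫)
    (heigen : ∀ v ∈ σ1 ⊔ σ2, ‖v‖ = 1 →
      1 < R v (A v) (A v) v / ‖A v‖ ^ 2 ∧
      ∀ u ∈ σ1 ⊔ σ2, R (A v) v v u = (R v (A v) (A v) v / ‖A v‖ ^ 2) * ⟪A v, u⟫)
    (hμ : μ1 < μ2) :
    lam1 < lam2 := by

  have hμ1' : (μ1:ℝ) ≠ 0 := ne_of_gt hμ1
  have hμ2' : (μ2:ℝ) ≠ 0 := ne_of_gt hμ2
  have hAself : ∀ x : V, ⟪x, A x⟫ = 0 := by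
    intro x
    have h1 := hAskew x x
    have h2 : ⟪x, A x⟫ = ⟪A x, x⟫ := real_inner_comm _ _
    linarith
  have pair2 : ∀ X Y Z W : V, R X Y Z W = - R X Y W Z := by
    intro X Y Z W
    rw [hpair X Y Z W, hskew Z W X Y, hpair W Z X Y]
  have exu : ∀ (σ : Submodule ℝ V), Module.finrank ℝ σ = 2 → ∃ e, e ∈ σ ∧ ‖e‖ = 1 := by
    intro σ hσ
    have hbot : σ ≠ ⊥ := by
      intro h; rw [h] at hσ; simp at hσ
    obtain ⟨x, hx, hx0⟩ := Submodule.exists_mem_ne_zero_of_ne_bot hbot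
    exact ⟨‖x‖⁻¹ • x, σ.smul_mem _ hx, norm_smul_inv_norm hx0⟩
  obtain ⟨e1, he1, hne1⟩ := exu σ1 hσ1
  obtain ⟨e2, he2, hne2⟩ := exu σ2 hσ2
  set f1 : V := μ1⁻¹ • A e1 with hf1def
  set f2 : V := μ2⁻¹ • A e2 with hf2def
  have hAe1m : A e1 ∈ σ1 := by rw [← hA1]; exact Submodule.mem_map_of_mem he1
  have hAe2m : A e2 ∈ σ2 := by rw [← hA2]; exact Submodule.mem_map_of_mem he2
  have hf1 : f1 ∈ σ1 := σ1.smul_mem _ hAe1m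
  have hf2 : f2 ∈ σ2 := σ2.smul_mem _ hAe2m
  have hnf1 : ‖f1‖ = 1 := by
    rw [hf1def, norm_smul, hAμ1 e1 he1, hne1, mul_one, norm_inv, Real.norm_eq_abs,
      abs_of_pos hμ1, inv_mul_cancel₀ hμ1']
  have hnf2 : ‖f2‖ = 1 := by
    rw [hf2def, norm_smul, hAμ2 e2 he2, hne2, mul_one, norm_inv, Real.norm_eq_abs,
      abs_of_pos hμ2, inv_mul_cancel₀ hμ2']
  have hAe1 : A e1 = μ1 • f1 := by rw [hf1def, smul_smul, mul_inv_cancel₀ hμ1', one_smul]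
  have hAe2 : A e2 = μ2 • f2 := by rw [hf2def, smul_smul, mul_inv_cancel₀ hμ2', one_smul]
  -- Gram facts
  have g_e1e1 : ⟪e1, e1⟫ = 1 := by rw [real_inner_self_eq_norm_sq, hne1]; norm_num
  have g_e2e2 : ⟪e2, e2⟫ = 1 := by rw [real_inner_self_eq_norm_sq, hne2]; norm_num
  have g_f1f1 : ⟪f1, f1⟫ = 1 := by rw [real_inner_self_eq_norm_sq, hnf1]; norm_num
  have g_f2f2 : ⟪f2, f2⟫ = 1 := by rw [real_inner_self_eq_norm_sq, hnf2]; norm_num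
  have g_e1f1 : ⟪e1, f1⟫ = 0 := by rw [hf1def, real_inner_smul_right, hAself, mul_zero]
  have g_f1e1 : ⟪f1, e1⟫ = 0 := by rw [real_inner_comm]; exact g_e1f1
  have g_e2f2 : ⟪e2, f2⟫ = 0 := by rw [hf2def, real_inner_smul_right, hAself, mul_zero]
  have g_f2e2 : ⟪f2, e2⟫ = 0 := by rw [real_inner_comm]; exact g_e2f2
  have g_e1e2 : ⟪e1, e2⟫ = 0 := horth e1 he1 e2 he2
  have g_e2e1 : ⟪e2, e1⟫ = 0 := by rw [real_inner_comm]; exact g_e1e2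
  have g_e1f2 : ⟪e1, f2⟫ = 0 := horth e1 he1 f2 hf2
  have g_f2e1 : ⟪f2, e1⟫ = 0 := by rw [real_inner_comm]; exact g_e1f2
  have g_f1e2 : ⟪f1, e2⟫ = 0 := horth f1 hf1 e2 he2
  have g_e2f1 : ⟪e2, f1⟫ = 0 := by rw [real_inner_comm]; exact g_f1e2
  have g_f1f2 : ⟪f1, f2⟫ = 0 := horth f1 hf1 f2 hf2
  have g_f2f1 : ⟪f2, f1⟫ = 0 := by rw [real_inner_comm]; exact g_f1f2
  -- memberships in W
  have hWe1 : e1 ∈ σ1 ⊔ σ2 := Submodule.mem_sup_left he1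
  have hWe2 : e2 ∈ σ1 ⊔ σ2 := Submodule.mem_sup_right he2
  have hWf1 : f1 ∈ σ1 ⊔ σ2 := Submodule.mem_sup_left hf1
  have hWf2 : f2 ∈ σ1 ⊔ σ2 := Submodule.mem_sup_right hf2
  -- basic curvature values
  have P1 : R f1 e1 e1 f1 = lam1 := by
    have h := hlam1 e1 he1 hne1
    rw [hAe1] at h
    simp only [map_smul, LinearMap.smul_apply, smul_eq_mul] at h
    have h2 : R e1 f1 f1 e1 = lam1 := by
      have hsq : (0:ℝ) < μ1 ^ 2 := by positivity
      have h3 : μ1 ^ 2 * R e1 f1 f1 e1 = μ1 ^ 2 * lam1 := by ring_nf; ring_nf at h; linarith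
      exact mul_left_cancel₀ (ne_of_gt hsq) h3
    rw [hskew f1 e1 e1 f1, pair2 e1 f1 e1 f1]
    linarith [h2]
  have P2 : R f2 e2 e2 f2 = lam2 := by
    have h := hlam2 e2 he2 hne2
    rw [hAe2] at h
    simp only [map_smul, LinearMap.smul_apply, smul_eq_mul] at h
    have h2 : R e2 f2 f2 e2 = lam2 := by
      have hsq : (0:ℝ) < μ2 ^ 2 := by positivity
      have h3 : μ2 ^ 2 * R e2 f2 f2 e2 = μ2 ^ 2 * lam2 := by ring_nf; ring_nf at h; linarith
      exact mul_left_cancel₀ (ne_of_gt hsq) h3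
    rw [hskew f2 e2 e2 f2, pair2 e2 f2 e2 f2]
    linarith [h2]
  have Q1 : R f1 e2 e2 f1 = 1 := by
    have h := hcvc e2 hWe2 hne2 f1 hWf1 g_f1e2 (by rw [hAe2, real_inner_smul_right, g_f1f2, mul_zero]) f1 hWf1
    rw [h, g_f1f1]
  have Q2 : R f2 e1 e1 f2 = 1 := by
    have h := hcvc e1 hWe1 hne1 f2 hWf2 g_f2e1 (by rw [hAe1, real_inner_smul_right, g_f2f1, mul_zero]) f2 hWf2
    rw [h, g_f2f2]
  -- the diagonal vectors
  set r : ℝ := (Real.sqrt 2)⁻¹ with hrdef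
  have hs2 : Real.sqrt 2 ^ 2 = 2 := Real.sq_sqrt (by norm_num)
  have hs0 : (0:ℝ) < Real.sqrt 2 := Real.sqrt_pos.2 (by norm_num)
  have hr0 : 0 < r := inv_pos.2 hs0
  have hr2 : r ^ 2 = 1/2 := by rw [hrdef, inv_pow, hs2]; norm_num
  set p : V := e1 + e2 with hpdef
  set q : V := e1 - e2 with hqdef
  set v : V := r • p with hvdef
  set v' : V := r • q with hv'def
  have hAp : A p = μ1 • f1 + μ2 • f2 := by rw [hpdef, map_add, hAe1, hAe2]
  have hAq : A q = μ1 • f1 - μ2 • f2 := by rw [hqdef, map_sub, hAe1, hAe2]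
  have hWv : v ∈ σ1 ⊔ σ2 := Submodule.smul_mem _ _ (add_mem hWe1 hWe2)
  have hWv' : v' ∈ σ1 ⊔ σ2 := Submodule.smul_mem _ _ (sub_mem hWe1 hWe2)
  have hnv : ‖v‖ = 1 := by
    have hpp : ⟪p, p⟫ = 2 := by
      rw [hpdef]
      simp only [inner_add_left, inner_add_right, g_e1e1, g_e2e2, g_e1e2, g_e2e1]
      norm_num
    have h1 : ⟪v, v⟫ = 1 := by
      rw [hvdef, real_inner_smul_left, real_inner_smul_right, hpp]
      linear_combination 2 * hr2
    have h2 : ‖v‖ ^ 2 = 1 := by rw [← real_inner_self_eq_norm_sq, h1]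
    rw [← Real.sqrt_sq (norm_nonneg v), h2, Real.sqrt_one]
  have hnv' : ‖v'‖ = 1 := by
    have hqq : ⟪q, q⟫ = 2 := by
      rw [hqdef]
      simp only [inner_sub_left, inner_sub_right, g_e1e1, g_e2e2, g_e1e2, g_e2e1]
      norm_num
    have h1 : ⟪v', v'⟫ = 1 := by
      rw [hv'def, real_inner_smul_left, real_inner_smul_right, hqq]
      linear_combination 2 * hr2
    have h2 : ‖v'‖ ^ 2 = 1 := by rw [← real_inner_self_eq_norm_sq, h1]
    rw [← Real.sqrt_sq (norm_nonneg v'), h2, Real.sqrt_one]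
  set w : V := μ1 • f2 - μ2 • f1 with hwdef
  set w' : V := μ1 • f2 + μ2 • f1 with hw'def
  have hWw : w ∈ σ1 ⊔ σ2 := sub_mem (Submodule.smul_mem _ _ hWf2) (Submodule.smul_mem _ _ hWf1)
  have hWw' : w' ∈ σ1 ⊔ σ2 := add_mem (Submodule.smul_mem _ _ hWf2) (Submodule.smul_mem _ _ hWf1)
  have hwv : ⟪w, v⟫ = 0 := by
    rw [hwdef, hvdef, hpdef]
    simp only [inner_sub_left, inner_add_right, real_inner_smul_left, real_inner_smul_right,
      g_f2e1, g_f2e2, g_f1e1, g_f1e2]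
    ring
  have hwAv : ⟪w, A v⟫ = 0 := by
    rw [hwdef, hvdef, map_smul, hAp]
    simp only [inner_sub_left, inner_add_right, real_inner_smul_left, real_inner_smul_right,
      g_f2f1, g_f2f2, g_f1f1, g_f1f2]
    ring
  have hw'v' : ⟪w', v'⟫ = 0 := by
    rw [hw'def, hv'def, hqdef]
    simp only [inner_add_left, inner_sub_right, real_inner_smul_left, real_inner_smul_right,
      g_f2e1, g_f2e2, g_f1e1, g_f1e2]
    ring
  have hw'Av' : ⟪w', A v'⟫ = 0 := by
    rw [hw'def, hv'def, map_smul, hAq]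
    simp only [inner_add_left, inner_sub_right, real_inner_smul_left, real_inner_smul_right,
      g_f2f1, g_f2f2, g_f1f1, g_f1f2]
    ring
  have hrne : r ≠ 0 := ne_of_gt hr0
  have hAv : A v = r • (μ1 • f1 + μ2 • f2) := by rw [hvdef, map_smul, hAp]
  have hAv' : A v' = r • (μ1 • f1 - μ2 • f2) := by rw [hv'def, map_smul, hAq]
  have hei := heigen v hWv hnv
  have hei' := heigen v' hWv' hnv'
  set L : ℝ := R v (A v) (A v) v / ‖A v‖ ^ 2 with hLdef
  set L' : ℝ := R v' (A v') (A v') v' / ‖A v'‖ ^ 2 with hL'def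
  obtain ⟨hl, hE⟩ := hei
  obtain ⟨hl', hE'⟩ := hei'
  -- Equation E1
  have E1 : μ1 * R f2 p p f1 - μ2 * R f1 p p f1 = -(2*μ2) := by
    have h := hcvc v hWv hnv w hWw hwv hwAv f1 hWf1
    rw [hwdef, hvdef] at h
    simp only [map_sub, sub_eq_add_neg, ← neg_smul, map_add, map_smul, LinearMap.add_apply, LinearMap.sub_apply, LinearMap.smul_apply, smul_eq_mul,
      inner_sub_left, inner_add_left, real_inner_smul_left, g_f2f1, g_f1f1] at h
    have h' : r^2 * (μ1 * R f2 p p f1 - μ2 * R f1 p p f1) = -μ2 := by linear_combination h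
    rw [hr2] at h'
    linarith
  -- Equation E2
  have E2 : μ1 * R f2 p p f2 - μ2 * R f1 p p f2 = 2*μ1 := by
    have h := hcvc v hWv hnv w hWw hwv hwAv f2 hWf2
    rw [hwdef, hvdef] at h
    simp only [map_sub, sub_eq_add_neg, ← neg_smul, map_add, map_smul, LinearMap.add_apply, LinearMap.sub_apply, LinearMap.smul_apply, smul_eq_mul,
      inner_sub_left, inner_add_left, real_inner_smul_left, g_f2f2, g_f1f2] at h
    have h' : r^2 * (μ1 * R f2 p p f2 - μ2 * R f1 p p f2) = μ1 := by linear_combination h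
    rw [hr2] at h'
    linarith
  -- Equation E1'
  have E1' : μ1 * R f2 q q f1 + μ2 * R f1 q q f1 = 2*μ2 := by
    have h := hcvc v' hWv' hnv' w' hWw' hw'v' hw'Av' f1 hWf1
    rw [hw'def, hv'def] at h
    simp only [map_add, map_smul, LinearMap.add_apply, LinearMap.smul_apply, smul_eq_mul,
      inner_add_left, real_inner_smul_left, g_f2f1, g_f1f1] at h
    have h' : r^2 * (μ1 * R f2 q q f1 + μ2 * R f1 q q f1) = μ2 := by linear_combination h
    rw [hr2] at h'
    linarith
  -- Equation E2'
  have E2' : μ1 * R f2 q q f2 + μ2 * R f1 q q f2 = 2*μ1 := by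
    have h := hcvc v' hWv' hnv' w' hWw' hw'v' hw'Av' f2 hWf2
    rw [hw'def, hv'def] at h
    simp only [map_add, map_smul, LinearMap.add_apply, LinearMap.smul_apply, smul_eq_mul,
      inner_add_left, real_inner_smul_left, g_f2f2, g_f1f2] at h
    have h' : r^2 * (μ1 * R f2 q q f2 + μ2 * R f1 q q f2) = μ1 := by linear_combination h
    rw [hr2] at h'
    linarith
  -- Equation E3
  have E3 : μ1 * R f1 p p f1 + μ2 * R f2 p p f1 = 2 * (L * μ1) := by
    have h := hE f1 hWf1
    rw [hAv, hvdef] at h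
    simp only [map_add, map_smul, LinearMap.add_apply, LinearMap.smul_apply, smul_eq_mul,
      inner_add_left, real_inner_smul_left, g_f1f1, g_f2f1] at h
    have h' : r * (r^2 * (μ1 * R f1 p p f1 + μ2 * R f2 p p f1)) = r * (L * μ1) := by
      linear_combination h
    rw [hr2] at h'
    have h'' := mul_left_cancel₀ hrne h'
    linarith
  -- Equation E4
  have E4 : μ1 * R f1 p p f2 + μ2 * R f2 p p f2 = 2 * (L * μ2) := by
    have h := hE f2 hWf2
    rw [hAv, hvdef] at h
    simp only [map_add, map_smul, LinearMap.add_apply, LinearMap.smul_apply, smul_eq_mul,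
      inner_add_left, real_inner_smul_left, g_f1f2, g_f2f2] at h
    have h' : r * (r^2 * (μ1 * R f1 p p f2 + μ2 * R f2 p p f2)) = r * (L * μ2) := by
      linear_combination h
    rw [hr2] at h'
    have h'' := mul_left_cancel₀ hrne h'
    linarith
  -- Equation E3'
  have E3' : μ1 * R f1 q q f1 - μ2 * R f2 q q f1 = 2 * (L' * μ1) := by
    have h := hE' f1 hWf1
    rw [hAv', hv'def] at h
    simp only [map_sub, sub_eq_add_neg, ← neg_smul, map_add, map_smul, LinearMap.add_apply, LinearMap.sub_apply, LinearMap.smul_apply, smul_eq_mul,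
      inner_sub_left, inner_add_left, real_inner_smul_left, g_f1f1, g_f2f1] at h
    have h' : r * (r^2 * (μ1 * R f1 q q f1 - μ2 * R f2 q q f1)) = r * (L' * μ1) := by
      linear_combination h
    rw [hr2] at h'
    have h'' := mul_left_cancel₀ hrne h'
    linarith
  -- Equation E4'
  have E4' : μ1 * R f1 q q f2 - μ2 * R f2 q q f2 = -(2 * (L' * μ2)) := by
    have h := hE' f2 hWf2
    rw [hAv', hv'def] at h
    simp only [map_sub, sub_eq_add_neg, ← neg_smul, map_add, map_smul, LinearMap.add_apply, LinearMap.sub_apply, LinearMap.smul_apply, smul_eq_mul,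
      inner_sub_left, inner_add_left, real_inner_smul_left, g_f1f2, g_f2f2] at h
    have h' : r * (r^2 * (μ1 * R f1 q q f2 - μ2 * R f2 q q f2)) = r * (-(L' * μ2)) := by
      linear_combination h
    rw [hr2] at h'
    have h'' := mul_left_cancel₀ hrne h'
    linarith
  -- eliminate the off-diagonal terms
  have Sa : (μ1^2+μ2^2) * R f1 p p f1 = 2*(L*μ1^2 + μ2^2) := by
    linear_combination μ1*E3 - μ2*E1
  have Sd : (μ1^2+μ2^2) * R f2 p p f2 = 2*(L*μ2^2 + μ1^2) := by
    linear_combination μ2*E4 + μ1*E2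
  have Sa' : (μ1^2+μ2^2) * R f1 q q f1 = 2*(L'*μ1^2 + μ2^2) := by
    linear_combination μ1*E3' + μ2*E1'
  have Sd' : (μ1^2+μ2^2) * R f2 q q f2 = 2*(L'*μ2^2 + μ1^2) := by
    linear_combination μ1*E2' - μ2*E4'
  -- expansions
  have hX1 : R f1 p p f1 + R f1 q q f1 = 2*(lam1+1) := by
    rw [hpdef, hqdef]
    simp only [map_add, map_sub, LinearMap.add_apply, LinearMap.sub_apply]
    linear_combination 2*P1 + 2*Q1
  have hX2 : R f2 p p f2 + R f2 q q f2 = 2*(lam2+1) := by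
    rw [hpdef, hqdef]
    simp only [map_add, map_sub, LinearMap.add_apply, LinearMap.sub_apply]
    linear_combination 2*P2 + 2*Q2
  have F1 : (μ1^2+μ2^2)*(lam1+1) = (L+L')*μ1^2 + 2*μ2^2 := by
    linear_combination (1/2)*Sa + (1/2)*Sa' - ((μ1^2+μ2^2)/2)*hX1
  have F2 : (μ1^2+μ2^2)*(lam2+1) = (L+L')*μ2^2 + 2*μ1^2 := by
    linear_combination (1/2)*Sd + (1/2)*Sd' - ((μ1^2+μ2^2)/2)*hX2
  have key : (μ1^2+μ2^2)*(lam2-lam1) = (L+L'-2)*(μ2^2-μ1^2) := by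
    linear_combination F2 - F1
  have hS : (0:ℝ) < μ1^2+μ2^2 := by positivity
  have h1 : (0:ℝ) < L+L'-2 := by linarith
  have h2 : (0:ℝ) < μ2^2-μ1^2 := sub_pos.mpr (pow_lt_pow_left₀ hμ hμ1.le (by norm_num))
  have h3 : 0 < (μ1^2+μ2^2)*(lam2-lam1) := key ▸ mul_pos h1 h2
  by_contra hc
  push_neg at hc
  have h4 : (μ1^2+μ2^2)*(lam2-lam1) ≤ 0 :=
    mul_nonpos_of_nonneg_of_nonpos (le_of_lt hS) (by linarith)
  linarith
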